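/- If X admits a covering p : X̃ → X with X̃ a non-simply connected small loop space, then X is not homotopically Hausdorff. -/

import Mathlib

open CategoryTheory Topology

attribute [local instance] Path.Homotopic.setoid

noncomputable section

variable {X Y E : Type*} [TopologicalSpace X] [TopologicalSpace Y] [TopologicalSpace E]

/-- Build an element of the fundamental group from a homotopy class of loops. -/
def fromLoop {x : X} (p : Path.Homotopic.Quotient x x) : FundamentalGroup X x :=
  p

/-- The homotopy class of loops underlying an element of the fundamental group. -/
def toLoop {x : X} (γ : FundamentalGroup X x) : Path.Homotopic.Quotient x x :=
  γ

/-- A fundamental group element is *small* if it has a loop representative inside every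
neighborhood of the basepoint. -/
def IsSmall {x : X} (γ : FundamentalGroup X x) : Prop :=
  ∀ U ∈ nhds x, ∃ δ : Path x x, (∀ t, δ t ∈ U) ∧ fromLoop ⟦δ⟧ = γ

/-- The set of small loop classes, i.e. the carrier of the small loop group `π₁ˢ(X,x)`. -/
def smallSet (X : Type*) [TopologicalSpace X] (x : X) : Set (FundamentalGroup X x) :=
  {γ | IsSmall γ}

/-- Conjugate of a loop class at `y` by a path `α` from `x` to `y`: `α * β * α⁻¹`. -/
def conjPath {x y : X} (α : Path x y) (β : FundamentalGroup X y) : FundamentalGroup X x :=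
  fromLoop (Path.Homotopic.Quotient.trans
    (Path.Homotopic.Quotient.trans (⟦α⟧ : Path.Homotopic.Quotient x y) (toLoop β))
    (⟦α.symm⟧ : Path.Homotopic.Quotient y x))

/-- The SG subgroup `π₁ˢᵍ(X,x)`: generated by conjugates of small loop classes. -/
def sgSubgroup (X : Type*) [TopologicalSpace X] (x : X) : Subgroup (FundamentalGroup X x) :=
  Subgroup.closure {g | ∃ (y : X) (α : Path x y) (β : FundamentalGroup X y), IsSmall β ∧ g = conjPath α β}

/-- The map induced on fundamental groups by a continuous map. -/
def piMap (f : C(X, Y)) (x : X) (γ : FundamentalGroup X x) : FundamentalGroup Y (f x) :=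
  fromLoop (Path.Homotopic.Quotient.map (toLoop γ) f)

/-- A small loop space: a path-connected, non-simply connected space all of whose loops
are small. -/
def IsSmallLoopSpace (X : Type*) [TopologicalSpace X] : Prop :=
  PathConnectedSpace X ∧ ¬ SimplyConnectedSpace X ∧
    ∀ (x : X) (γ : FundamentalGroup X x), IsSmall γ

/-- A space is homotopically Hausdorff if every nontrivial loop class can be kept away from
some neighborhood of its basepoint. -/
def HomotopicallyHausdorff (X : Type*) [TopologicalSpace X] : Prop :=
  ∀ (x : X) (γ : FundamentalGroup X x), γ ≠ 1 →
    ∃ U ∈ nhds x, ∀ δ : Path x x, (∀ t, δ t ∈ U) → fromLoop ⟦δ⟧ ≠ γ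

/-- The image of `π₁(U,y) → π₁(X,y)`: classes of loops having a representative inside `U`. -/
def loopsIn (U : Set X) (y : X) : Set (FundamentalGroup X y) :=
  {γ | ∃ δ : Path y y, (∀ t, δ t ∈ U) ∧ fromLoop ⟦δ⟧ = γ}

/-- A semi-locally small loop space. -/
def SemiLocallySmallLoop (X : Type*) [TopologicalSpace X] : Prop :=
  ∀ x : X, ∃ U : Set X, IsOpen U ∧ x ∈ U ∧ ∀ y ∈ U, loopsIn U y = smallSet X y



section CoveringMachinery
open Set unitInterval

section Glue
variable {α β : Type*} [TopologicalSpace α] [TopologicalSpace β]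

lemma glue_continuousOn {D Q : Set α} {f g : α → β} [∀ z, Decidable (z ∈ D)]
    (hD : IsClosed D) (hQ : IsClosed Q)
    (hf : ContinuousOn f D) (hg : ContinuousOn g Q) (heq : EqOn f g (D ∩ Q)) :
    ContinuousOn (fun z => if z ∈ D then f z else g z) (D ∪ Q) := by
  rw [continuousOn_iff_isClosed]
  intro t ht
  refine ⟨(D ∩ f ⁻¹' t) ∪ (Q ∩ g ⁻¹' t), ((hf.preimage_isClosed_of_isClosed hD ht).union
    (hg.preimage_isClosed_of_isClosed hQ ht)), ?_⟩
  ext z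
  simp only [mem_inter_iff, mem_union, mem_preimage]
  constructor
  · rintro ⟨hzt, hz⟩
    by_cases hzD : z ∈ D
    · exact ⟨Or.inl ⟨hzD, by simpa [hzD] using hzt⟩, hz⟩
    · rcases hz with h | h
      · exact absurd h hzD
      · exact ⟨Or.inr ⟨h, by simpa [hzD] using hzt⟩, Or.inr h⟩
  · rintro ⟨h | h, hz⟩
    · exact ⟨by simpa [h.1] using h.2, hz⟩
    · by_cases hzD : z ∈ D
      · have := heq ⟨hzD, h.1⟩
        refine ⟨by simp only [if_pos hzD]; rw [this]; exact h.2, hz⟩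
      · exact ⟨by simpa [hzD] using h.2, hz⟩
end Glue

section Ext
variable {E X : Type*} [TopologicalSpace E] [TopologicalSpace X]

lemma ext_lift {p : E → X} (hp : IsCoveringMap p) {H : I × I → X} (hH : Continuous H)
    {D Q : Set (I × I)} (hD : IsClosed D) (hQ : IsClosed Q)
    (hDQ : _root_.IsPreconnected (D ∩ Q)) (hne : (D ∩ Q).Nonempty)
    {x : X} (hx : ∀ z ∈ Q, H z ∈ (hp x).2.choose)
    {g : I × I → E} (hg : ContinuousOn g D) (hpg : ∀ z ∈ D, p (g z) = H z) :
    ∃ g' : I × I → E, ContinuousOn g' (D ∪ Q) ∧ (∀ z ∈ D ∪ Q, p (g' z) = H z) ∧ EqOn g' g D := by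
  classical
  haveI : DiscreteTopology ↥(p ⁻¹' {x}) := (hp x).1
  obtain ⟨z₀, hz₀⟩ := hne
  haveI : Nonempty ↑(p ⁻¹' {x}) := ⟨((hp x).2.choose_spec.2.2.2.choose
    ⟨g z₀, show p (g z₀) ∈ (hp x).2.choose by rw [hpg z₀ hz₀.1]; exact hx z₀ hz₀.2⟩).2⟩
  set t := (hp x).toTrivialization with ht
  have hmem : ∀ z ∈ D ∩ Q, g z ∈ t.source := fun z hz =>
    t.mem_source.mpr (by rw [hpg z hz.1]; exact hx z hz.2)
  -- fiber coordinate is constant on D ∩ Q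
  have hcont2 : ContinuousOn (fun z => (t (g z)).2) (D ∩ Q) := by
    apply (continuous_snd.comp_continuousOn ?_)
    exact t.continuousOn_toFun.comp (hg.mono inter_subset_left) hmem
  have hconst : ∀ z ∈ D ∩ Q, (t (g z)).2 = (t (g z₀)).2 := by
    intro z hz
    have himg : _root_.IsPreconnected ((fun z => (t (g z)).2) '' (D ∩ Q)) := hDQ.image _ hcont2
    exact himg.subsingleton (mem_image_of_mem _ hz) (mem_image_of_mem _ hz₀)
  set c := (t (g z₀)).2 with hc
  set h : I × I → E := fun z => t.toOpenPartialHomeomorph.symm (H z, c) with hhdef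
  have hph : ∀ z ∈ Q, p (h z) = H z := fun z hz => t.proj_symm_apply' (hx z hz)
  have hhcont : ContinuousOn h Q := by
    apply t.toOpenPartialHomeomorph.continuousOn_symm.comp
      ((hH.prodMk continuous_const).continuousOn)
    intro z hz
    rw [t.mem_target]
    exact hx z hz
  have heq : EqOn g h (D ∩ Q) := by
    intro z hz
    have h1 : t (g z) = (H z, c) := by
      refine Prod.ext ?_ (hconst z hz)
      rw [t.coe_fst (hmem z hz), hpg z hz.1]
    rw [hhdef]
    simp only [← h1]
    exact (t.toOpenPartialHomeomorph.left_inv (hmem z hz)).symm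
  refine ⟨fun z => if z ∈ D then g z else h z,
    glue_continuousOn hD hQ hg hhcont heq, ?_, fun z hz => if_pos hz⟩
  intro z hz
  by_cases hzD : z ∈ D
  · simp only [if_pos hzD]; exact hpg z hzD
  · simp only [if_neg hzD]; exact hph z (hz.resolve_left hzD)

end Ext

section Seg

lemma isPreconnected_seg_v (a : I) (c d : ℝ) :
    _root_.IsPreconnected {z : I × I | z.1 = a ∧ c ≤ (z.2:ℝ) ∧ (z.2:ℝ) ≤ d} := by
  have hf : Continuous (fun t : ℝ => ((a, projIcc 0 1 zero_le_one t) : I × I)) :=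
    (continuous_const.prodMk continuous_projIcc)
  have himg : {z : I × I | z.1 = a ∧ c ≤ (z.2:ℝ) ∧ (z.2:ℝ) ≤ d} =
      (fun t : ℝ => ((a, projIcc 0 1 zero_le_one t) : I × I)) '' (Icc (max c 0) (min d 1)) := by
    ext z
    constructor
    · rintro ⟨hz1, hc, hd⟩
      refine ⟨(z.2 : ℝ), ⟨max_le hc z.2.2.1, le_min hd z.2.2.2⟩, ?_⟩
      show ((a, projIcc 0 1 zero_le_one (z.2:ℝ)) : ↑I × ↑I) = z
      rw [projIcc_of_mem _ ⟨z.2.2.1, z.2.2.2⟩]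
      exact Prod.ext hz1.symm rfl
    · rintro ⟨t, ⟨ht1, ht2⟩, rfl⟩
      have htI : t ∈ Icc (0:ℝ) 1 := ⟨le_trans (le_max_right c 0) ht1, ht2.trans (min_le_right d 1)⟩
      have hpt : ((projIcc 0 1 zero_le_one t : I) : ℝ) = t := by rw [projIcc_of_mem _ htI]
      refine ⟨rfl, ?_, ?_⟩ <;> rw [hpt]
      · exact le_trans (le_max_left c 0) ht1
      · exact ht2.trans (min_le_left d 1)
  rw [himg]
  exact isPreconnected_Icc.image _ hf.continuousOn

lemma isPreconnected_seg_h (b : I) (c d : ℝ) :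
    _root_.IsPreconnected {z : I × I | z.2 = b ∧ c ≤ (z.1:ℝ) ∧ (z.1:ℝ) ≤ d} := by
  have hf : Continuous (fun t : ℝ => ((projIcc 0 1 zero_le_one t, b) : I × I)) :=
    (continuous_projIcc.prodMk continuous_const)
  have himg : {z : I × I | z.2 = b ∧ c ≤ (z.1:ℝ) ∧ (z.1:ℝ) ≤ d} =
      (fun t : ℝ => ((projIcc 0 1 zero_le_one t, b) : I × I)) '' (Icc (max c 0) (min d 1)) := by
    ext z
    constructor
    · rintro ⟨hz1, hc, hd⟩
      refine ⟨(z.1 : ℝ), ⟨max_le hc z.1.2.1, le_min hd z.1.2.2⟩, ?_⟩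
      show ((projIcc 0 1 zero_le_one (z.1:ℝ), b) : ↑I × ↑I) = z
      rw [projIcc_of_mem _ ⟨z.1.2.1, z.1.2.2⟩]
      exact Prod.ext rfl hz1.symm
    · rintro ⟨t, ⟨ht1, ht2⟩, rfl⟩
      have htI : t ∈ Icc (0:ℝ) 1 := ⟨le_trans (le_max_right c 0) ht1, ht2.trans (min_le_right d 1)⟩
      have hpt : ((projIcc 0 1 zero_le_one t : I) : ℝ) = t := by rw [projIcc_of_mem _ htI]
      refine ⟨rfl, ?_, ?_⟩ <;> rw [hpt]
      · exact le_trans (le_max_left c 0) ht1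
      · exact ht2.trans (min_le_left d 1)
  rw [himg]
  exact isPreconnected_Icc.image _ hf.continuousOn

/-- rectangles in the unit square -/
def sqR (a b c d : ℝ) : Set (I × I) :=
  {z : I × I | a ≤ (z.1:ℝ) ∧ (z.1:ℝ) ≤ b ∧ c ≤ (z.2:ℝ) ∧ (z.2:ℝ) ≤ d}

lemma isClosed_sqR (a b c d : ℝ) : IsClosed (sqR a b c d) := by
  have : sqR a b c d = ((fun z : I × I => (z.1:ℝ)) ⁻¹' Icc a b) ∩
      ((fun z : I × I => (z.2:ℝ)) ⁻¹' Icc c d) := by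
    ext z; simp [sqR, mem_Icc, and_assoc]
  rw [this]
  exact (isClosed_Icc.preimage (continuous_subtype_val.comp continuous_fst)).inter
    (isClosed_Icc.preimage (continuous_subtype_val.comp continuous_snd))

/-- staircase sets -/
def sqS (n i j : ℕ) : Set (I × I) :=
  {z : I × I | (j ≠ 0 ∧ (z.2:ℝ) ≤ (j:ℝ)/(n:ℝ)) ∨
    ((z.2:ℝ) ≤ ((j:ℝ)+1)/(n:ℝ) ∧ (z.1:ℝ) ≤ (i:ℝ)/(n:ℝ))}

lemma isClosed_half_v (a : ℝ) : IsClosed {z : I × I | (z.2:ℝ) ≤ a} :=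
  isClosed_Iic.preimage (continuous_subtype_val.comp continuous_snd)

lemma isClosed_sqS (n i j : ℕ) : IsClosed (sqS n i j) := by
  by_cases hj : j = 0
  · subst hj
    have : sqS n i 0 = {z : I × I | (z.2:ℝ) ≤ 1/(n:ℝ) ∧ (z.1:ℝ) ≤ (i:ℝ)/(n:ℝ)} := by
      ext z; simp [sqS]
    rw [this]
    exact (isClosed_half_v (1/(n:ℝ))).inter
      (isClosed_Iic.preimage (continuous_subtype_val.comp continuous_fst))
  · have : sqS n i j = {z : I × I | (z.2:ℝ) ≤ (j:ℝ)/(n:ℝ)} ∪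
        ({z : I × I | (z.2:ℝ) ≤ ((j:ℝ)+1)/(n:ℝ)} ∩ {z : I × I | (z.1:ℝ) ≤ (i:ℝ)/(n:ℝ)}) := by
      ext z; simp [sqS, hj, and_assoc]
    rw [this]
    exact (isClosed_half_v _).union ((isClosed_half_v _).inter
      (isClosed_Iic.preimage (continuous_subtype_val.comp continuous_fst)))

end Seg

section Square
variable {E X : Type*} [TopologicalSpace E] [TopologicalSpace X]

theorem square_lift {p : E → X} (hp : IsCoveringMap p) {H : I × I → X} (hH : Continuous H)
    (e₀ : E) (he₀ : p e₀ = H (0, 0)) :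
    ∃ G : I × I → E, Continuous G ∧ (∀ z, p (G z) = H z) ∧ G (0, 0) = e₀ := by
  classical
  -- Lebesgue number for the covering by evenly covered neighborhoods
  obtain ⟨δ, hδpos, hδ⟩ := lebesgue_number_lemma_of_metric (s := (univ : Set (I × I)))
    (c := fun w : I × I => H ⁻¹' (hp (H w)).2.choose) isCompact_univ
    (fun w => (hp (H w)).2.choose_spec.2.1.preimage hH)
    (fun z _ => mem_iUnion.mpr ⟨z, (hp (H z)).2.choose_spec.1⟩)
  obtain ⟨m, hm⟩ := exists_nat_one_div_lt hδpos
  set n : ℕ := m + 1 with hn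
  have hnpos : 0 < (n:ℝ) := by positivity
  have hδn : 1/(n:ℝ) < δ := by rw [hn]; push_cast; exact_mod_cast hm
  set u : ℕ → ℝ := fun i => (i:ℝ)/(n:ℝ) with hu
  have hu0 : u 0 = 0 := by simp [hu]
  have hun : u n = 1 := by simp only [hu]; exact div_self hnpos.ne'
  have humem : ∀ i : ℕ, i ≤ n → u i ∈ Icc (0:ℝ) 1 := by
    intro i hi
    refine ⟨by positivity, ?_⟩
    rw [hu]; rw [div_le_one hnpos]; exact_mod_cast hi
  have hudiff : ∀ i : ℕ, u (i+1) - u i = 1/(n:ℝ) := by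
    intro i; rw [hu]; push_cast; ring
  have humono : ∀ i j : ℕ, i ≤ j → u i ≤ u j := by
    intro i j h
    rw [hu]
    dsimp only
    gcongr
  -- each small cell maps into an evenly covered neighborhood
  have hcell : ∀ i j : ℕ, i < n → j < n → ∃ x : X,
      ∀ z ∈ sqR (u i) (u (i+1)) (u j) (u (j+1)), H z ∈ (hp x).2.choose := by
    intro i j hi hj
    set w : I × I := (⟨u i, humem i hi.le⟩, ⟨u j, humem j hj.le⟩) with hw
    obtain ⟨w', hw'⟩ := hδ w (mem_univ _)
    refine ⟨H w', fun z hz => hw' ?_⟩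
    obtain ⟨h1, h2, h3, h4⟩ := hz
    rw [Metric.mem_ball, Prod.dist_eq]
    have d1 : dist z.1 w.1 < δ := by
      rw [Subtype.dist_eq, Real.dist_eq, abs_sub_lt_iff]
      have := hudiff i
      constructor <;> simp only [hw] <;> linarith
    have d2 : dist z.2 w.2 < δ := by
      rw [Subtype.dist_eq, Real.dist_eq, abs_sub_lt_iff]
      have := hudiff j
      constructor <;> simp only [hw] <;> linarith
    exact max_lt d1 d2
  have hneg : ∀ k : ℕ, 0 ≤ u k := by intro k; rw [hu]; positivity
  have huc : ∀ k : ℕ, ((k:ℝ)+1)/(n:ℝ) = u (k+1) := by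
    intro k; rw [hu]; push_cast; ring
  have hSmem : ∀ (i j : ℕ) (z : I × I), z ∈ sqS n i j ↔
      ((j ≠ 0 ∧ (z.2:ℝ) ≤ u j) ∨ ((z.2:ℝ) ≤ u (j+1) ∧ (z.1:ℝ) ≤ u i)) := by
    intro i j z
    simp only [sqS, mem_setOf_eq, huc]
    exact Iff.rfl
  have hRmem : ∀ (a b c d : ℝ) (z : I × I), z ∈ sqR a b c d ↔
      (a ≤ (z.1:ℝ) ∧ (z.1:ℝ) ≤ b ∧ c ≤ (z.2:ℝ) ∧ (z.2:ℝ) ≤ d) := by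
    intro a b c d z; rfl
  set lift : Set (I × I) → Prop := fun D => ∃ g : I × I → E, ContinuousOn g D ∧
    (∀ z ∈ D, p (g z) = H z) ∧ g (0, 0) = e₀ with hlift
  have hnn : 0 < n := Nat.succ_pos m
  -- base case
  have base : lift (sqS n 0 0) := by
    obtain ⟨x, hx⟩ := hcell 0 0 hnn hnn
    have hQsub : sqR (u 0) (u 0) (u 0) (u 1) ⊆ sqR (u 0) (u 1) (u 0) (u 1) := by
      intro z hz
      rw [hRmem] at hz ⊢
      exact ⟨hz.1, hz.2.1.trans (humono 0 1 (by omega)), hz.2.2⟩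
    have h00Q : ((0,0) : I × I) ∈ sqR (u 0) (u 0) (u 0) (u 1) := by
      rw [hRmem, hu0]
      simp only [Icc.coe_zero]
      norm_num
      exact hneg 1
    have hDQ : ({((0,0) : I × I)} : Set (I × I)) ∩ sqR (u 0) (u 0) (u 0) (u 1)
        = {((0,0) : I × I)} := inter_eq_self_of_subset_left (by
          intro z hz; rw [mem_singleton_iff] at hz; subst hz; exact h00Q)
    obtain ⟨g', hg'c, hg'p, hg'e⟩ := ext_lift hp hH (isClosed_singleton)
      (isClosed_sqR (u 0) (u 0) (u 0) (u 1))
      (by rw [hDQ]; exact isPreconnected_singleton)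
      (by rw [hDQ]; exact singleton_nonempty _)
      (fun z hz => hx z (hQsub hz))
      (continuousOn_const (c := e₀))
      (fun z hz => by rw [mem_singleton_iff] at hz; subst hz; exact he₀)
    have hS00 : sqS n 0 0 = {((0,0) : I × I)} ∪ sqR (u 0) (u 0) (u 0) (u 1) := by
      ext z
      rw [hSmem, mem_union, mem_singleton_iff, hRmem, hu0]
      have z10 := z.1.2.1
      have z20 := z.2.2.1
      constructor
      · rintro (⟨hj, _⟩ | ⟨h1, h2⟩)
        · exact absurd rfl hj
        · exact Or.inr ⟨z10, h2, z20, h1⟩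
      · rintro (hz | ⟨_, h2, _, h4⟩)
        · subst hz
          simp only [Icc.coe_zero]
          exact Or.inr ⟨hneg 1, le_refl _⟩
        · exact Or.inr ⟨h4, h2⟩
    refine ⟨g', ?_, ?_, ?_⟩
    · rw [hS00]; exact hg'c
    · intro z hz; rw [hS00] at hz; exact hg'p z hz
    · rw [hg'e (mem_singleton _)]
  -- column step
  have step_col : ∀ i j : ℕ, i < n → j < n → lift (sqS n i j) → lift (sqS n (i+1) j) := by
    intro i j hi hj ⟨g, hgc, hgp, hg0⟩
    obtain ⟨x, hx⟩ := hcell i j hi hj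
    set Q := sqR (u i) (u (i+1)) (u j) (u (j+1)) with hQ
    set ai : I := ⟨u i, humem i hi.le⟩ with hai
    set bj : I := ⟨u j, humem j hj.le⟩ with hbj
    set V : Set (I × I) := {z | z.1 = ai ∧ u j ≤ (z.2:ℝ) ∧ (z.2:ℝ) ≤ u (j+1)} with hV
    set B : Set (I × I) := {z | z.2 = bj ∧ u i ≤ (z.1:ℝ) ∧ (z.1:ℝ) ≤ u (i+1)} with hB
    have corner : (ai, bj) ∈ V ∩ B := by
      constructor
      · exact ⟨rfl, le_refl _, humono j (j+1) (by omega)⟩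
      · exact ⟨rfl, le_refl _, humono i (i+1) (by omega)⟩
    have hpreconn : _root_.IsPreconnected (sqS n i j ∩ Q) := by
      by_cases hj0 : j = 0
      · have : sqS n i j ∩ Q = V := by
          subst hj0
          ext z
          rw [mem_inter_iff, hSmem, hQ, hRmem, hV, mem_setOf_eq]
          constructor
          · rintro ⟨(⟨hj,_⟩ | ⟨h1, h2⟩), c1, c2, c3, c4⟩
            · exact absurd rfl hj
            · exact ⟨Subtype.ext (le_antisymm h2 c1), c3, c4⟩
          · rintro ⟨h1, h2, h3⟩
            have h1' : (z.1:ℝ) = u i := congrArg Subtype.val h1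
            refine ⟨Or.inr ⟨h3, le_of_eq h1'⟩, le_of_eq h1'.symm, ?_, h2, h3⟩
            rw [h1']; exact humono i (i+1) (by omega)
        rw [this]
        exact isPreconnected_seg_v ai (u j) (u (j+1))
      · have : sqS n i j ∩ Q = V ∪ B := by
          ext z
          rw [mem_inter_iff, hSmem, hQ, hRmem, mem_union, hV, hB,
            mem_setOf_eq, mem_setOf_eq]
          constructor
          · rintro ⟨(⟨_, h2⟩ | ⟨h1, h2⟩), c1, c2, c3, c4⟩
            · exact Or.inr ⟨Subtype.ext (le_antisymm h2 c3), c1, c2⟩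
            · exact Or.inl ⟨Subtype.ext (le_antisymm h2 c1), c3, c4⟩
          · rintro (⟨h1, h2, h3⟩ | ⟨h1, h2, h3⟩)
            · have h1' : (z.1:ℝ) = u i := congrArg Subtype.val h1
              refine ⟨Or.inr ⟨h3, le_of_eq h1'⟩, le_of_eq h1'.symm, ?_, h2, h3⟩
              rw [h1']; exact humono i (i+1) (by omega)
            · have h1' : (z.2:ℝ) = u j := congrArg Subtype.val h1
              refine ⟨Or.inl ⟨hj0, le_of_eq h1'⟩, h2, h3, le_of_eq h1'.symm, ?_⟩
              rw [h1']; exact humono j (j+1) (by omega)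
        rw [this]
        exact (isPreconnected_seg_v ai (u j) (u (j+1))).union (ai, bj) corner.1 corner.2
          (isPreconnected_seg_h bj (u i) (u (i+1)))
    have hnonempty : (sqS n i j ∩ Q).Nonempty := by
      refine ⟨(ai, bj), ?_, ?_⟩
      · rw [hSmem]
        exact Or.inr ⟨humono j (j+1) (by omega), le_refl _⟩
      · rw [hQ, hRmem]
        exact ⟨le_refl _, humono i (i+1) (by omega), le_refl _, humono j (j+1) (by omega)⟩
    obtain ⟨g', hg'c, hg'p, hg'e⟩ := ext_lift hp hH (isClosed_sqS n i j) (isClosed_sqR _ _ _ _)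
      hpreconn hnonempty hx hgc hgp
    have hunion : sqS n i j ∪ Q = sqS n (i+1) j := by
      ext z
      rw [mem_union, hSmem, hSmem, hQ, hRmem]
      have z10 := z.1.2.1
      have z20 := z.2.2.1
      constructor
      · rintro ((h | ⟨h1, h2⟩) | ⟨c1, c2, c3, c4⟩)
        · exact Or.inl h
        · exact Or.inr ⟨h1, h2.trans (humono i (i+1) (by omega))⟩
        · exact Or.inr ⟨c4, c2⟩
      · rintro (h | ⟨h1, h2⟩)
        · exact Or.inl (Or.inl h)
        · by_cases hz1 : (z.1:ℝ) ≤ u i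
          · exact Or.inl (Or.inr ⟨h1, hz1⟩)
          · by_cases hz2 : u j ≤ (z.2:ℝ)
            · exact Or.inr ⟨le_of_not_ge hz1, h2, hz2, h1⟩
            · have hj0 : j ≠ 0 := by
                intro h; subst h; rw [hu0] at hz2; exact hz2 z20
              exact Or.inl (Or.inl ⟨hj0, le_of_not_ge hz2⟩)
    have h00 : ((0,0) : I × I) ∈ sqS n i j := by
      rw [hSmem]
      exact Or.inr ⟨(hneg (j+1)).trans_eq' rfl, (hneg i).trans_eq' rfl⟩
    refine ⟨g', ?_, ?_, ?_⟩
    · rw [← hunion]; exact hg'c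
    · intro z hz; rw [← hunion] at hz; exact hg'p z hz
    · rw [hg'e h00]; exact hg0
  -- row step
  have step_row : ∀ j : ℕ, j + 1 < n → lift (sqS n n j) → lift (sqS n 0 (j+1)) := by
    intro j hj ⟨g, hgc, hgp, hg0⟩
    obtain ⟨x, hx⟩ := hcell 0 (j+1) hnn hj
    set Q := sqR (u 0) (u 0) (u (j+1)) (u (j+1+1)) with hQ
    have hQsub : Q ⊆ sqR (u 0) (u 1) (u (j+1)) (u (j+1+1)) := by
      intro z hz
      rw [hQ, hRmem] at hz
      rw [hRmem]
      exact ⟨hz.1, hz.2.1.trans (humono 0 1 (by omega)), hz.2.2⟩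
    set a0 : I := ⟨u 0, humem 0 (by omega)⟩ with ha0
    set V : Set (I × I) := {z | z.1 = a0 ∧ u (j+1) ≤ (z.2:ℝ) ∧ (z.2:ℝ) ≤ u (j+1)} with hV
    have hinter : sqS n n j ∩ Q = V := by
      ext z
      rw [mem_inter_iff, hSmem, hQ, hRmem, hV, mem_setOf_eq]
      constructor
      · rintro ⟨(⟨_, h2⟩ | ⟨h1, _⟩), c1, c2, c3, c4⟩
        · exact ⟨Subtype.ext (le_antisymm c2 c1), c3,
            h2.trans (humono j (j+1) (by omega))⟩
        · exact ⟨Subtype.ext (le_antisymm c2 c1), c3, h1⟩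
      · rintro ⟨h1, h2, h3⟩
        have h1' : (z.1:ℝ) = u 0 := congrArg Subtype.val h1
        refine ⟨Or.inr ⟨h3, ?_⟩, le_of_eq h1'.symm, le_of_eq h1', h2,
          h3.trans (humono (j+1) (j+1+1) (by omega))⟩
        rw [h1', hu0]; exact hneg n
    have hne : (sqS n n j ∩ Q).Nonempty := by
      refine ⟨(a0, ⟨u (j+1), humem (j+1) (by omega)⟩), ?_⟩
      rw [hinter, hV]
      exact ⟨rfl, le_refl _, le_refl _⟩
    obtain ⟨g', hg'c, hg'p, hg'e⟩ := ext_lift hp hH (isClosed_sqS n n j) (isClosed_sqR _ _ _ _)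
      (by rw [hinter]; exact isPreconnected_seg_v a0 (u (j+1)) (u (j+1))) hne
      (fun z hz => hx z (hQsub hz)) hgc hgp
    have hunion : sqS n n j ∪ Q = sqS n 0 (j+1) := by
      ext z
      rw [mem_union, hSmem, hSmem, hQ, hRmem]
      have z10 := z.1.2.1
      constructor
      · rintro ((⟨h1, h2⟩ | ⟨h1, h2⟩) | ⟨c1, c2, c3, c4⟩)
        · exact Or.inl ⟨by omega, h2.trans (humono j (j+1) (by omega))⟩
        · exact Or.inl ⟨by omega, h1⟩
        · exact Or.inr ⟨c4, c2⟩
      · rintro (⟨_, h2⟩ | ⟨h1, h2⟩)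
        · refine Or.inl (Or.inr ⟨h2, ?_⟩)
          rw [hun]; exact z.1.2.2
        · by_cases hz2 : u (j+1) ≤ (z.2:ℝ)
          · refine Or.inr ⟨?_, h2, hz2, h1⟩
            rw [hu0]; exact z10
          · refine Or.inl (Or.inr ⟨le_of_not_ge hz2, ?_⟩)
            rw [hun]; exact z.1.2.2
    have h00 : ((0,0) : I × I) ∈ sqS n n j := by
      rw [hSmem]
      simp only [Icc.coe_zero]
      exact Or.inr ⟨hneg (j+1), hneg n⟩
    refine ⟨g', ?_, ?_, ?_⟩
    · rw [← hunion]; exact hg'c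
    · intro z hz; rw [← hunion] at hz; exact hg'p z hz
    · rw [hg'e h00]; exact hg0
  -- assemble the induction
  have hrowall : ∀ j, j < n → lift (sqS n 0 j) → ∀ i, i ≤ n → lift (sqS n i j) := by
    intro j hj h0 i hi
    induction i with
    | zero => exact h0
    | succ k ih => exact step_col k j (by omega) hj (ih (by omega))
  have hcolall : ∀ j, j < n → lift (sqS n 0 j) := by
    intro j
    induction j with
    | zero => exact fun _ => base
    | succ k ih =>
      intro h
      exact step_row k h (hrowall k (by omega) (ih (by omega)) n le_rfl)
  obtain ⟨g, hgc, hgp, hg0⟩ := hrowall (n-1) (by omega) (hcolall (n-1) (by omega)) n le_rfl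
  have huniv : sqS n n (n-1) = univ := by
    ext z
    rw [hSmem]
    simp only [mem_univ, iff_true]
    have hn1 : n - 1 + 1 = n := by omega
    rw [hn1, hun]
    exact Or.inr ⟨z.2.2.2, z.1.2.2⟩
  refine ⟨g, ?_, ?_, hg0⟩
  · rw [huniv] at hgc; exact continuousOn_univ.mp hgc
  · intro z; exact hgp z (by rw [huniv]; trivial)

end Square
section LoopLift
variable {E X : Type*} [TopologicalSpace E] [TopologicalSpace X]

attribute [local instance] Path.Homotopic.setoid

theorem homotopic_refl_of_map_lift {p : C(E, X)} (hp : IsCoveringMap p) {e : E} (δ : Path e e)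
    (h : (⟦δ.map p.continuous⟧ : Path.Homotopic.Quotient (p e) (p e)) = ⟦Path.refl (p e)⟧) :
    (⟦δ⟧ : Path.Homotopic.Quotient e e) = ⟦Path.refl e⟧ := by
  obtain ⟨F⟩ := Quotient.exact h
  obtain ⟨G, hGc, hGp, hG0⟩ := square_lift hp F.continuous e (by
    rw [F.apply_zero]
    simp)
  have hedge : (fun s => G (0, s)) = ⇑δ := by
    apply hp.eq_of_comp_eq (hGc.comp (continuous_const.prodMk continuous_id)) δ.continuous
      ?_ 0 (by show G (0, 0) = δ 0; rw [hG0, δ.source])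
    funext s
    show p (G (0, s)) = p (δ s)
    rw [hGp (0, s), F.apply_zero]
    simp
  have hbot : ∀ t : unitInterval, G (t, 0) = e := by
    intro t
    have := hp.const_of_comp (g := fun t => G (t, 0))
      (hGc.comp (continuous_id.prodMk continuous_const)) ?_ t 0
    · rw [this, hG0]
    · intro a a'
      show p (G (a, 0)) = p (G (a', 0))
      rw [hGp (a, 0), hGp (a', 0), F.eq_fst a (by norm_num), F.eq_fst a' (by norm_num)]
  have htop : ∀ t : unitInterval, G (t, 1) = e := by
    intro t
    have h1 := hp.const_of_comp (g := fun t => G (t, 1))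
      (hGc.comp (continuous_id.prodMk continuous_const)) ?_ t 0
    · rw [h1]
      have := congrFun hedge 1
      rw [this, δ.target]
    · intro a a'
      show p (G (a, 1)) = p (G (a', 1))
      rw [hGp (a, 1), hGp (a', 1), F.eq_fst a (by norm_num), F.eq_fst a' (by norm_num)]
  have hright : ∀ s : unitInterval, G (1, s) = e := by
    intro s
    have h1 := hp.const_of_comp (g := fun s => G (1, s))
      (hGc.comp (continuous_const.prodMk continuous_id)) ?_ s 0
    · rw [h1, hbot 1]
    · intro a a'
      show p (G (1, a)) = p (G (1, a'))
      rw [hGp (1, a), hGp (1, a'), F.apply_one, F.apply_one]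
      rfl
  refine Quotient.sound ⟨⟨⟨⟨fun ts => G ts, hGc⟩, ?_, ?_⟩, ?_⟩⟩
  · intro s
    exact congrFun hedge s
  · intro s
    exact hright s
  · intro t s hs
    rcases hs with rfl | hs
    · show G (t, 0) = δ 0
      rw [hbot t, δ.source]
    · rw [Set.mem_singleton_iff] at hs
      subst hs
      show G (t, 1) = δ 1
      rw [htop t, δ.target]

end LoopLift
end CoveringMachinery

section Plumbing

lemma toLoop_fromLoop {Z : Type*} [TopologicalSpace Z] {x : Z}
    (q : Path.Homotopic.Quotient x x) : toLoop (fromLoop q) = q := rfl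

lemma fromLoop_toLoop {Z : Type*} [TopologicalSpace Z] {x : Z} (γ : FundamentalGroup Z x) :
    fromLoop (toLoop γ) = γ :=
  rfl

lemma fromLoop_refl_eq_one {Z : Type*} [TopologicalSpace Z] (x : Z) :
    fromLoop (⟦Path.refl x⟧ : Path.Homotopic.Quotient x x) = 1 := by
  have h : (⟦Path.refl x⟧ : Path.Homotopic.Quotient x x) = toLoop (1 : FundamentalGroup Z x) := rfl
  rw [h, fromLoop_toLoop]

lemma fromLoop_eq_one_iff {Z : Type*} [TopologicalSpace Z] {x : Z}
    (q : Path.Homotopic.Quotient x x) :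
    fromLoop q = 1 ↔ q = ⟦Path.refl x⟧ := by
  constructor
  · intro h
    have h2 := congrArg toLoop h
    rw [toLoop_fromLoop] at h2
    rw [h2]; rfl
  · intro h; rw [h, fromLoop_refl_eq_one]

end Plumbing

/-- if `X` admits a covering by a (non-simply connected) small loop space, then
`X` is not homotopically Hausdorff. -/
theorem not_homotopicallyHausdorff_of_small_covering {E X : Type*} [TopologicalSpace E]
    [TopologicalSpace X] (p : C(E, X)) (hp : IsCoveringMap p) (hE : IsSmallLoopSpace E) :
    ¬ HomotopicallyHausdorff X := by
  obtain ⟨hPC, hnSC, hsmall⟩ := hE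
  have hns : ¬ ∀ x y : E, Subsingleton (Path.Homotopic.Quotient x y) := fun h =>
    hnSC (simply_connected_iff_paths_homotopic.mpr ⟨hPC, h⟩)
  push_neg at hns
  obtain ⟨x, y, hxy⟩ := hns
  obtain ⟨a, b, hab⟩ := @exists_pair_ne _ hxy
  let a' : FundamentalGroupoid.mk x ⟶ FundamentalGroupoid.mk y := a
  let b' : FundamentalGroupoid.mk x ⟶ FundamentalGroupoid.mk y := b
  let f : FundamentalGroupoid.mk x ⟶ FundamentalGroupoid.mk x :=
    a' ≫ CategoryTheory.Groupoid.inv b'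
  set γ₀ : FundamentalGroup E x := fromLoop f with hγ₀def
  have hγ₀ : γ₀ ≠ 1 := by
    intro h1
    rw [hγ₀def, fromLoop_eq_one_iff] at h1
    have hf : f = 𝟙 (FundamentalGroupoid.mk x) := by
      show f = _
      rw [show (f : Path.Homotopic.Quotient x x) = ⟦Path.refl x⟧ from h1]
      exact (FundamentalGroupoid.id_eq_path_refl (FundamentalGroupoid.mk x)).symm
    have hor : a' = b' := by
      have h2 : (a' ≫ CategoryTheory.Groupoid.inv b') ≫ b' = 𝟙 _ ≫ b' := by
        rw [show a' ≫ CategoryTheory.Groupoid.inv b' = f from rfl, hf]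
      simpa [CategoryTheory.Category.assoc, CategoryTheory.Groupoid.inv_comp,
        CategoryTheory.Category.comp_id, CategoryTheory.Category.id_comp] using h2
    exact hab hor
  intro hHH
  set γ : FundamentalGroup X (p x) := piMap p x γ₀ with hγdef
  have hsm : IsSmall γ := by
    intro U hU
    obtain ⟨δ, hδ, hq⟩ := hsmall x γ₀ (⇑p ⁻¹' U) (p.continuous.continuousAt.preimage_mem_nhds hU)
    refine ⟨δ.map p.continuous, fun t => by simpa using hδ t, ?_⟩
    have h1 : (⟦δ.map p.continuous⟧ : Path.Homotopic.Quotient (p x) (p x))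
        = Path.Homotopic.Quotient.map ⟦δ⟧ p := Path.Homotopic.Quotient.mk_map δ p
    rw [hγdef, h1, ← hq]
    rfl
  have hne : γ ≠ 1 := by
    intro h1
    obtain ⟨δt, hδt⟩ := Quotient.exists_rep (toLoop γ₀)
    have h2 : γ = fromLoop ⟦δt.map p.continuous⟧ := by
      rw [hγdef]
      show fromLoop (Path.Homotopic.Quotient.map (toLoop γ₀) p) = _
      rw [← hδt]; rfl
    rw [h2] at h1; replace h1 := (fromLoop_eq_one_iff _).mp h1
    have h3 := homotopic_refl_of_map_lift hp δt h1
    apply hγ₀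
    rw [← fromLoop_toLoop γ₀, ← hδt, h3, fromLoop_refl_eq_one]
  obtain ⟨U, hU, hbad⟩ := hHH (p x) γ hne
  obtain ⟨δ, hδU, hδγ⟩ := hsm U hU
  exact hbad δ hδU hδγ

end
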